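/- For every digraph D, inv(D) ≤ τ'(D), where τ'(D) is the cycle edge-transversal (feedback arc set) number of D. -/

import Mathlib

/-- Inverting a set `X` in a digraph `D`: edges with both endpoints in `X`
are reversed, all other edges are unchanged. -/
def Invert {V : Type*} (D : V → V → Prop) (X : Set V) : V → V → Prop :=
  fun u v => (u ∈ X ∧ v ∈ X ∧ D v u) ∨ (¬(u ∈ X ∧ v ∈ X) ∧ D u v)

/-- A digraph is acyclic if it has no directed cycle. -/
def IsAcyclic {V : Type*} (D : V → V → Prop) : Prop :=
  ∀ x : V, ¬ Relation.TransGen D x x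

/-- A loopless digraph without digons (an oriented graph). -/
def IsOriented {V : Type*} (D : V → V → Prop) : Prop :=
  ∀ u v, D u v → ¬ D v u

/-- A tournament: an oriented graph with exactly one edge between any two
distinct vertices. -/
def IsTournament {V : Type*} (D : V → V → Prop) : Prop :=
  (∀ u v, D u v → ¬ D v u) ∧ ∀ u v, u ≠ v → D u v ∨ D v u

/-- The inversion number of a digraph: the minimum length of a decycling
family, i.e. a sequence of sets whose successive inversion makes `D` acyclic. -/
noncomputable def invNum {V : Type*} (D : V → V → Prop) : ℕ :=
  sInf {k | ∃ Xs : List (Set V), Xs.length = k ∧ IsAcyclic (Xs.foldl Invert D)}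

/-- The cycle edge-transversal (feedback arc set) number of a digraph. -/
noncomputable def tauEdge {V : Type*} (D : V → V → Prop) : ℕ :=
  sInf {k | ∃ F : Finset (V × V), F.card = k ∧
    IsAcyclic (fun a b => D a b ∧ (a, b) ∉ F)}

namespace InvAux

variable {V : Type*}

def Rev (S : Set (V × V)) (D : V → V → Prop) : V → V → Prop :=
  fun u v => (((u, v) ∈ S ∨ (v, u) ∈ S) ∧ D v u) ∨ (¬((u, v) ∈ S ∨ (v, u) ∈ S) ∧ D u v)

lemma invert_pair (D : V → V → Prop) {a b : V} (hab : a ≠ b) :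
    Invert D {a, b} = Rev {(a, b)} D := by
  funext u v
  simp only [Invert, Rev, Set.mem_insert_iff, Set.mem_singleton_iff, Prod.mk.injEq, eq_iff_iff]
  by_cases hua : u = a <;> by_cases hub : u = b <;> by_cases hva : v = a <;>
    by_cases hvb : v = b <;> simp_all <;> tauto

lemma fold_invert : ∀ (L : List (V × V)) (D : V → V → Prop),
    (∀ e ∈ L, e.1 ≠ e.2) →
    L.Pairwise (fun e e' => e' ≠ e ∧ e' ≠ e.swap) →
    List.foldl Invert D (L.map fun e => ({e.1, e.2} : Set V)) = Rev {e | e ∈ L} D := by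
  intro L
  induction L with
  | nil => intro D _ _; funext u v; simp [Rev]
  | cons e L ih =>
    intro D hne hpw
    simp only [List.map_cons, List.foldl_cons]
    rw [invert_pair D (hne e List.mem_cons_self),
      ih _ (fun e' he' => hne e' (List.mem_cons_of_mem _ he')) hpw.of_cons]
    have he : ∀ e' ∈ L, e' ≠ e ∧ e' ≠ e.swap := fun e' h => (List.pairwise_cons.mp hpw).1 e' h
    funext u v
    have hmk : ((e.1, e.2) : V × V) = e := rfl
    simp only [Rev, Set.mem_setOf_eq, Set.mem_singleton_iff, List.mem_cons, hmk, eq_iff_iff]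
    have h1 : (u, v) ∈ L → (u, v) ≠ e ∧ (v, u) ≠ e := by
      intro h
      refine ⟨(he _ h).1, fun hh => (he _ h).2 ?_⟩
      rw [← hh]; rfl
    have h2 : (v, u) ∈ L → (u, v) ≠ e ∧ (v, u) ≠ e := by
      intro h
      refine ⟨fun hh => (he _ h).2 ?_, (he _ h).1⟩
      rw [← hh]; rfl
    tauto

end InvAux

section Main

open InvAux

theorem invNum_le_tauEdge {V : Type*} [Fintype V]
    (D : V → V → Prop) (hD : IsOriented D) :
    invNum D ≤ tauEdge D := by
  classical
  -- the tau set is nonempty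
  have hne : {k | ∃ F : Finset (V × V), F.card = k ∧
      IsAcyclic (fun a b => D a b ∧ (a, b) ∉ F)}.Nonempty := by
    refine ⟨(Finset.univ : Finset (V × V)).card, Finset.univ, rfl, fun x hx => ?_⟩
    cases hx with
    | single h => exact h.2 (Finset.mem_univ _)
    | tail _ h => exact h.2 (Finset.mem_univ _)
  obtain ⟨F, hF, hac⟩ := Nat.sInf_mem hne
  -- height function from the acyclic digraph D \ F
  set r : V → V → Prop := Relation.TransGen (fun a b => D a b ∧ (a, b) ∉ F) with hr
  have hirr : ∀ x, ¬ r x x := hac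
  set f : V → ℕ := fun v => (Finset.univ.filter (fun u => r u v)).card with hfdef
  have hf : ∀ a b, D a b → (a, b) ∉ F → f a < f b := by
    intro a b hab hnf
    have hstep : r a b := Relation.TransGen.single ⟨hab, hnf⟩
    apply Finset.card_lt_card
    rw [Finset.ssubset_iff_of_subset]
    · exact ⟨a, Finset.mem_filter.mpr ⟨Finset.mem_univ _, hstep⟩,
        fun h => hirr a (Finset.mem_filter.mp h).2⟩
    · intro u hu
      exact Finset.mem_filter.mpr ⟨Finset.mem_univ _,
        (Finset.mem_filter.mp hu).2.tail ⟨hab, hnf⟩⟩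
  set N := Fintype.card V with hN
  set g : V → ℕ := fun v => ((Fintype.equivFin V) v : ℕ) with hgdef
  have hglt : ∀ v, g v < N + 1 := fun v => Nat.lt_succ_of_lt ((Fintype.equivFin V v).isLt)
  set w : V → ℕ := fun v => f v * (N + 1) + g v with hwdef
  have hwmono : ∀ a b, f a < f b → w a < w b := by
    intro a b hab
    calc w a < (f a + 1) * (N + 1) := by
          simp only [hwdef, add_mul, one_mul]; exact Nat.add_lt_add_left (hglt a) _
      _ ≤ f b * (N + 1) := Nat.mul_le_mul_right _ hab
      _ ≤ w b := Nat.le_add_right _ _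
  have hwinj : Function.Injective w := by
    intro a b hab
    have hg : g a = g b := by
      have h1 : w a % (N + 1) = g a := by
        simp only [hwdef]; rw [Nat.add_comm, Nat.add_mul_mod_self_right]; exact Nat.mod_eq_of_lt (hglt a)
      have h2 : w b % (N + 1) = g b := by
        simp only [hwdef]; rw [Nat.add_comm, Nat.add_mul_mod_self_right]; exact Nat.mod_eq_of_lt (hglt b)
      rw [← h1, ← h2, hab]
    have : (Fintype.equivFin V) a = (Fintype.equivFin V) b := Fin.val_injective hg
    exact (Fintype.equivFin V).injective this
  -- the backward edges
  set B : Finset (V × V) := F.filter (fun e => D e.1 e.2 ∧ w e.2 < w e.1) with hB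
  set L : List (V × V) := B.toList with hL
  have hmemL : ∀ e, e ∈ L ↔ e ∈ B := fun e => Finset.mem_toList
  have hne1 : ∀ e ∈ L, e.1 ≠ e.2 := by
    intro e heL heq
    have := (Finset.mem_filter.mp ((hmemL e).mp heL)).2.1
    exact hD e.1 e.2 this (heq ▸ this)
  have hnoswap : ∀ e ∈ L, ∀ e' ∈ L, e' ≠ e.swap := by
    intro e heL e' he'L heq
    have h1 := (Finset.mem_filter.mp ((hmemL e).mp heL)).2.1
    have h2 := (Finset.mem_filter.mp ((hmemL e').mp he'L)).2.1
    rw [heq] at h2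
    exact hD e.1 e.2 h1 h2
  have hpw : L.Pairwise (fun e e' => e' ≠ e ∧ e' ≠ e.swap) := by
    have hnd : L.Pairwise (fun e e' => e' ≠ e) :=
      List.Pairwise.imp (fun h => Ne.symm h) (Finset.nodup_toList B)
    have hsw : L.Pairwise (fun e e' => e' ≠ e.swap) := by
      apply List.pairwise_of_forall_mem_list
      intro a ha b hb
      exact hnoswap a ha b hb
    exact hnd.and hsw
  -- the decycling family
  have hkey : B.card ∈ {k | ∃ Xs : List (Set V), Xs.length = k ∧
      IsAcyclic (Xs.foldl Invert D)} := by
    refine ⟨L.map (fun e => ({e.1, e.2} : Set V)), by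
      rw [List.length_map, hL, Finset.length_toList], ?_⟩
    rw [fold_invert L D hne1 hpw]
    have key : ∀ u v, Rev {e | e ∈ L} D u v → w u < w v := by
      intro u v huv
      rcases huv with ⟨hm, hvu⟩ | ⟨hm, huv⟩
      · rcases hm with hm | hm
        · exact absurd hvu (hD u v (Finset.mem_filter.mp ((hmemL _).mp hm)).2.1)
        · exact (Finset.mem_filter.mp ((hmemL _).mp hm)).2.2
      · simp only [Set.mem_setOf_eq] at hm
        push_neg at hm
        by_cases hF' : (u, v) ∈ F
        · have hnB : (u, v) ∉ B := fun h => hm.1 ((hmemL _).mpr h)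
          have : ¬ w v < w u := fun h => hnB (Finset.mem_filter.mpr ⟨hF', huv, h⟩)
          have hneq : w u ≠ w v := fun h => by
            have := hwinj h
            exact hD u v huv (this ▸ huv)
          omega
        · exact hwmono u v (hf u v huv hF')
    intro x hx
    have htg : ∀ a b, Relation.TransGen (Rev {e | e ∈ L} D) a b → w a < w b := by
      intro a b hab
      induction hab with
      | single h => exact key _ _ h
      | tail _ h ih => exact lt_trans ih (key _ _ h)
    exact lt_irrefl _ (htg x x hx)
  calc invNum D ≤ B.card := Nat.sInf_le hkey
    _ ≤ F.card := Finset.card_filter_le _ _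
    _ = tauEdge D := hF

end Main
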